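/- Let H be a non-negative self-adjoint operator on a Hilbert space ℋ. If there exists a sequence ψ_n in the form domain D(H^{1/2}) with ‖ψ_n‖ = 1, with ‖(H+1)^{-1/2}(H−λ)ψ_n‖ → 0, and with ψ_n converging weakly to 0 in ℋ, then λ belongs to the essential spectrum of H. -/

import Mathlib

open Filter

/-- The essential spectrum of a (bounded) self-adjoint operator: points of the spectrum that
are either accumulation points of the spectrum or eigenvalues of infinite multiplicity. -/
def essSpectrum {ℋ : Type*} [NormedAddCommGroup ℋ] [InnerProductSpace ℂ ℋ] [CompleteSpace ℋ]
    (H : ℋ →L[ℂ] ℋ) : Set ℝ :=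
  {lam | lam ∈ spectrum ℝ H ∧
    (AccPt lam (Filter.principal (spectrum ℝ H)) ∨
      ¬ FiniteDimensional ℂ
        (LinearMap.ker (H - (lam : ℂ) • (1 : ℋ →L[ℂ] ℋ)).toLinearMap))}

/-- Auxiliary: a function which is `c` at an isolated point `lam` of `C` and continuous away
from `lam` is continuous on `C`. -/
lemma aux_cont (C : Set ℝ) (lam c : ℝ) (U : Set ℝ) (hU : U ∈ nhds lam)
    (hiso : ∀ y ∈ U ∩ C, y = lam) (g : ℝ → ℝ) (hg : ∀ t ≠ lam, ContinuousAt g t) :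
    ContinuousOn (fun t => if t = lam then c else g t) C := by
  intro t ht
  by_cases h : t = lam
  · subst h
    refine ContinuousWithinAt.congr_of_eventuallyEq
      (continuousWithinAt_const (b := c)) ?_ (by simp)
    filter_upwards [nhdsWithin_le_nhds hU, self_mem_nhdsWithin] with y hy hyC
    simp [hiso y ⟨hy, hyC⟩]
  · have hev : (fun t => if t = lam then c else g t) =ᶠ[nhds t] g := by
      filter_upwards [isOpen_ne.mem_nhds h] with y hy
      simp [hy]
    exact ((hg t h).congr hev.symm).continuousWithinAt

/-- Auxiliary: weak convergence to `0` of a sequence in a finite-dimensional subspace implies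
norm convergence to `0`. -/
lemma aux_findim {ℋ : Type*} [NormedAddCommGroup ℋ] [InnerProductSpace ℂ ℋ] [CompleteSpace ℋ]
    (F : Submodule ℂ ℋ) [FiniteDimensional ℂ F] (u : ℕ → F)
    (h : ∀ φ : ℋ, Tendsto (fun n => (inner ℂ φ ((u n : ℋ)) : ℂ)) atTop (nhds 0)) :
    Tendsto (fun n => ‖(u n : ℋ)‖) atTop (nhds 0) := by
  have b := stdOrthonormalBasis ℂ F
  have hbound : ∀ n, ‖(u n : ℋ)‖ ≤ ∑ i, ‖(inner ℂ ((b i : ℋ)) ((u n : ℋ)) : ℂ)‖ := by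
    intro n
    have hsum := b.sum_repr (u n)
    calc ‖(u n : ℋ)‖ = ‖u n‖ := rfl
      _ = ‖∑ i, b.repr (u n) i • b i‖ := by rw [hsum]
      _ ≤ ∑ i, ‖b.repr (u n) i • b i‖ := norm_sum_le _ _
      _ = ∑ i, ‖(inner ℂ ((b i : ℋ)) ((u n : ℋ)) : ℂ)‖ := by
          refine Finset.sum_congr rfl fun i _ => ?_
          rw [norm_smul, b.repr_apply_apply]
          have hb1 : ‖b i‖ = 1 := b.orthonormal.1 i
          simp [Submodule.coe_inner, hb1]
  have hterm : Tendsto (fun n => ∑ i, ‖(inner ℂ ((b i : ℋ)) ((u n : ℋ)) : ℂ)‖) atTop (nhds 0) := by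
    have : Tendsto (fun n => ∑ i, ‖(inner ℂ ((b i : ℋ)) ((u n : ℋ)) : ℂ)‖) atTop
        (nhds (∑ _i : Fin (Module.finrank ℂ F), (0:ℝ))) := by
      apply tendsto_finset_sum
      intro i _
      simpa using (h (b i)).norm
    simpa using this
  exact squeeze_zero (fun n => norm_nonneg _) hbound hterm

/-- Let `H` be a non-negative self-adjoint operator on a Hilbert space `ℋ`.
If there exists a sequence `ψ n` in the form domain with `‖ψ n‖ = 1`, with
`‖(H+1)^{-1/2}(H-λ)ψ n‖ → 0`, and with `ψ n` converging weakly to `0` in `ℋ`, then `λ`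
belongs to the essential spectrum of `H`. -/
theorem stmt2 {ℋ : Type*} [NormedAddCommGroup ℋ] [InnerProductSpace ℂ ℋ] [CompleteSpace ℋ]
    (H : ℋ →L[ℂ] ℋ) (hH : H.IsPositive) (lam : ℝ) (ψ : ℕ → ℋ)
    (hnorm : ∀ n, ‖ψ n‖ = 1)
    (hconv : Tendsto
      (fun n => ‖cfc (fun t : ℝ => Real.sqrt ((t + 1)⁻¹)) H (H (ψ n) - (lam : ℂ) • ψ n)‖)
      atTop (nhds 0))
    (hweak : ∀ φ : ℋ, Tendsto (fun n => (inner ℂ φ (ψ n) : ℂ)) atTop (nhds 0)) :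
    lam ∈ essSpectrum H := by
  have hsa : IsSelfAdjoint H := hH.isSelfAdjoint
  have hspec : spectrum ℝ H ⊆ Set.Ici 0 := fun x hx =>
    spectrum_nonneg_of_nonneg ((ContinuousLinearMap.nonneg_iff_isPositive H).mpr hH) hx
  set f : ℝ → ℝ := fun t => Real.sqrt ((t + 1)⁻¹) with hf_def
  set g : ℝ → ℝ := fun t => Real.sqrt (t + 1) with hg_def
  set v : ℕ → ℋ := fun n => H (ψ n) - (lam : ℂ) • ψ n with hv_def
  have hgc : ContinuousOn g (spectrum ℝ H) := by fun_prop
  have hfc : ContinuousOn f (spectrum ℝ H) := by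
    apply ContinuousOn.sqrt
    apply ContinuousOn.inv₀ (by fun_prop)
    intro x hx
    have := hspec hx
    simp only [Set.mem_Ici] at this
    positivity
  have hgf : cfc g H * cfc f H = 1 := by
    rw [← cfc_mul _ _ H hgc hfc, ← cfc_one ℝ H]
    apply cfc_congr
    intro x hx
    have hx0 : (0:ℝ) ≤ x := hspec hx
    have h1 : (0:ℝ) < x + 1 := by linarith
    simp only [Pi.one_apply]
    rw [← Real.sqrt_mul (by positivity), mul_inv_cancel₀ (by positivity), Real.sqrt_one]
  -- norm convergence of `v n = (H - lam) ψ n` to zero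
  have hv : Tendsto (fun n => ‖v n‖) atTop (nhds 0) := by
    refine squeeze_zero (fun n => norm_nonneg _)
      (g := fun n => ‖cfc g H‖ * ‖cfc f H (v n)‖) (fun n => ?_) ?_
    · have hvn : (cfc g H) (cfc f H (v n)) = v n := by
        rw [← ContinuousLinearMap.mul_apply, hgf, ContinuousLinearMap.one_apply]
      nth_rewrite 1 [← hvn]
      exact (cfc g H).le_opNorm _
    · have := hconv.const_mul ‖cfc g H‖
      rw [mul_zero] at this
      exact this
  -- the operator `T = H - lam`
  set T : ℋ →L[ℂ] ℋ := H - (lam : ℂ) • (1 : ℋ →L[ℂ] ℋ) with hT_def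
  have hTcfc : cfc (fun t : ℝ => t - lam) H = T := by
    rw [cfc_sub (fun t : ℝ => t) (fun _ => lam) H, cfc_id' ℝ H, cfc_const lam H]
    congr 1
  have hTψ : ∀ n, T (ψ n) = v n := by
    intro n
    simp [hT_def, hv_def, ContinuousLinearMap.sub_apply, ContinuousLinearMap.smul_apply,
      ContinuousLinearMap.one_apply]
  -- `lam` is in the spectrum
  have hmem : lam ∈ spectrum ℝ H := by
    by_contra hns
    rw [spectrum.notMem_iff] at hns
    obtain ⟨u, hu⟩ := hns
    have h1 : ∀ n, (↑u : ℋ →L[ℂ] ℋ) (ψ n) = -(v n) := by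
      intro n
      rw [hu]
      have : algebraMap ℝ (ℋ →L[ℂ] ℋ) lam - H = -T := by
        rw [hT_def]
        have : algebraMap ℝ (ℋ →L[ℂ] ℋ) lam = (lam : ℂ) • (1 : ℋ →L[ℂ] ℋ) := by
          rw [Algebra.algebraMap_eq_smul_one]
          exact (Complex.coe_smul lam 1).symm
        rw [this]; abel
      rw [this]
      simp [hTψ n]
    have hψ0 : Tendsto (fun n => ‖ψ n‖) atTop (nhds 0) := by
      refine squeeze_zero (fun n => norm_nonneg _)
        (g := fun n => ‖(↑u⁻¹ : ℋ →L[ℂ] ℋ)‖ * ‖v n‖) (fun n => ?_) ?_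
      · have : (↑u⁻¹ : ℋ →L[ℂ] ℋ) (-(v n)) = ψ n := by
          rw [← h1 n, ← ContinuousLinearMap.mul_apply, u.inv_mul,
            ContinuousLinearMap.one_apply]
        rw [← this]
        calc ‖(↑u⁻¹ : ℋ →L[ℂ] ℋ) (-(v n))‖ ≤ ‖(↑u⁻¹ : ℋ →L[ℂ] ℋ)‖ * ‖-(v n)‖ :=
              (↑u⁻¹ : ℋ →L[ℂ] ℋ).le_opNorm _
          _ = ‖(↑u⁻¹ : ℋ →L[ℂ] ℋ)‖ * ‖v n‖ := by rw [norm_neg]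
      · have := hv.const_mul ‖(↑u⁻¹ : ℋ →L[ℂ] ℋ)‖
        rw [mul_zero] at this
        exact this
    simp only [hnorm] at hψ0
    have := tendsto_nhds_unique hψ0 tendsto_const_nhds
    norm_num at this
  refine ⟨hmem, ?_⟩
  by_contra hc
  push_neg at hc
  obtain ⟨hacc, hfd⟩ := hc
  -- `lam` is isolated in the spectrum
  obtain ⟨U, hU, hiso⟩ : ∃ U ∈ nhds lam, ∀ y ∈ U ∩ spectrum ℝ H, y = lam := by
    rw [accPt_iff_nhds] at hacc
    push_neg at hacc
    obtain ⟨U, hU, h⟩ := hacc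
    exact ⟨U, hU, fun y hy => h y hy⟩
  set χ : ℝ → ℝ := fun t => if t = lam then 1 else 0 with hχ_def
  set r : ℝ → ℝ := fun t => if t = lam then 0 else (t - lam)⁻¹ with hr_def
  have hχc : ContinuousOn χ (spectrum ℝ H) :=
    aux_cont _ _ _ U hU hiso _ (fun t _ => continuousAt_const)
  have hrc : ContinuousOn r (spectrum ℝ H) :=
    aux_cont _ _ _ U hU hiso _ (fun t ht =>
      ((continuousAt_id.sub continuousAt_const).inv₀ (sub_ne_zero.mpr ht)))
  set P : ℋ →L[ℂ] ℋ := cfc χ H with hP_def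
  have hPsa : IsSelfAdjoint P := cfc_predicate χ H
  -- range of P is contained in the kernel of T
  have hsub : ∀ x, P x ∈ LinearMap.ker T.toLinearMap := by
    intro x
    have hTP : T * P = 0 := by
      rw [← hTcfc, hP_def, ← cfc_mul _ _ H (by fun_prop) hχc, ← cfc_zero ℝ H]
      apply cfc_congr
      intro t _
      by_cases h : t = lam <;> simp [hχ_def, h]
    have := congrArg (fun A : ℋ →L[ℂ] ℋ => A x) hTP
    simpa [ContinuousLinearMap.mul_apply, LinearMap.mem_ker] using this
  -- (1 - P) inverts T
  have hRT : cfc r H * T = 1 - P := by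
    rw [← hTcfc, ← cfc_mul _ _ H hrc (by fun_prop)]
    have h1P : (1 : ℋ →L[ℂ] ℋ) - P = cfc (fun t => 1 - χ t) H := by
      rw [cfc_sub (fun _ : ℝ => (1:ℝ)) χ H, cfc_const 1 H, map_one]
    rw [h1P]
    apply cfc_congr
    intro t _
    by_cases h : t = lam
    · simp [hr_def, hχ_def, h]
    · simp only [hr_def, hχ_def, if_neg h]
      rw [inv_mul_cancel₀ (sub_ne_zero.mpr h)]
      simp
  -- `(1-P) ψ n → 0` in norm
  have h1Pψ : Tendsto (fun n => ‖ψ n - P (ψ n)‖) atTop (nhds 0) := by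
    have key : ∀ n, ψ n - P (ψ n) = (cfc r H) (v n) := by
      intro n
      have := congrArg (fun A : ℋ →L[ℂ] ℋ => A (ψ n)) hRT
      simp only [ContinuousLinearMap.mul_apply, ContinuousLinearMap.sub_apply,
        ContinuousLinearMap.one_apply] at this
      rw [hTψ n] at this
      exact this.symm
    refine squeeze_zero (fun n => norm_nonneg _)
      (g := fun n => ‖cfc r H‖ * ‖v n‖) (fun n => ?_) ?_
    · rw [key n]
      exact (cfc r H).le_opNorm _
    · have := hv.const_mul ‖cfc r H‖
      rw [mul_zero] at this
      exact this
  -- `P ψ n → 0` in norm, using the finite-dimensional kernel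
  have hPψ : Tendsto (fun n => ‖P (ψ n)‖) atTop (nhds 0) := by
    have := aux_findim (LinearMap.ker T.toLinearMap)
      (fun n => ⟨P (ψ n), hsub (ψ n)⟩) (fun φ => ?_)
    · exact this
    · have key : ∀ n, (inner ℂ φ (P (ψ n)) : ℂ) = inner ℂ (P φ) (ψ n) := by
        intro n
        rw [← ContinuousLinearMap.adjoint_inner_left, hPsa.adjoint_eq]
      simpa [key] using hweak (P φ)
  -- conclude: `ψ n → 0` in norm, contradicting `‖ψ n‖ = 1`
  have hψ0 : Tendsto (fun n => ‖ψ n‖) atTop (nhds 0) := by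
    refine squeeze_zero (fun n => norm_nonneg _)
      (g := fun n => ‖P (ψ n)‖ + ‖ψ n - P (ψ n)‖) (fun n => ?_) ?_
    · calc ‖ψ n‖ = ‖P (ψ n) + (ψ n - P (ψ n))‖ := by congr 1; abel
        _ ≤ ‖P (ψ n)‖ + ‖ψ n - P (ψ n)‖ := norm_add_le _ _
    · simpa using hPψ.add h1Pψ
  simp only [hnorm] at hψ0
  have := tendsto_nhds_unique hψ0 tendsto_const_nhds
  norm_num at this
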